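/- In the bivariate normal model with σ_p = σ_c = σ > 0 and regression slope β < 1, the absolute mobility equals A = Φ((μ_c − μ_p)/(σ√(2(1 − β)))); in particular, holding μ_c > μ_p fixed, A → 1 as β → 1⁻. -/

import Mathlib

open MeasureTheory ProbabilityTheory
open scoped NNReal ENNReal

/-- The cumulative distribution function of the standard normal distribution. -/
noncomputable def stdNormalCDF (t : ℝ) : ℝ := (gaussianReal 0 1 (Set.Iic t)).toReal

/-- The covariance of two real random variables. -/
noncomputable def covar {Ω : Type*} [MeasurableSpace Ω] (μ : Measure Ω) (X Y : Ω → ℝ) : ℝ :=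
  ∫ ω, (X ω - ∫ x, X x ∂μ) * (Y ω - ∫ x, Y x ∂μ) ∂μ

/-- `(Xp, Xc)` is a bivariate Gaussian vector with means `μp, μc`, variances `vp, vc` and
covariance `c`: every linear combination `a • Xp + b • Xc` is Gaussian with the
corresponding mean and variance. -/
def IsBivariateGaussian {Ω : Type*} [MeasurableSpace Ω] (μ : Measure Ω)
    (Xp Xc : Ω → ℝ) (μp μc vp vc c : ℝ) : Prop :=
  ∀ a b : ℝ, Measure.map (fun ω => a * Xp ω + b * Xc ω) μ =
    gaussianReal (a * μp + b * μc) (a ^ 2 * vp + 2 * a * b * c + b ^ 2 * vc).toNNReal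

lemma gaussianReal_neg_map : (gaussianReal 0 1).map (fun x : ℝ => (-1 : ℝ) * x)
    = gaussianReal 0 1 := by
  rw [show (fun x : ℝ => (-1 : ℝ) * x) = ((-1 : ℝ) * ·) from rfl,
    gaussianReal_map_const_mul]
  norm_num

lemma std_noAtoms : ∀ x : ℝ, gaussianReal 0 1 {x} = 0 := fun x =>
  gaussianReal_absolutelyContinuous 0 one_ne_zero (measure_singleton x)

lemma gauss_Ioi (m : ℝ) (v : ℝ≥0) (hv : v ≠ 0) :
    gaussianReal m v (Set.Ioi 0) = gaussianReal 0 1 (Set.Iic (m / Real.sqrt v)) := by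
  have hvpos : (0 : ℝ) < (v : ℝ) := by
    exact_mod_cast (pos_iff_ne_zero).2 hv
  have hs : 0 < Real.sqrt v := Real.sqrt_pos.2 hvpos
  have h1 : (⟨(Real.sqrt v) ^ 2, sq_nonneg _⟩ : ℝ≥0) * 1 = v := by
    ext
    simp [Real.sq_sqrt hvpos.le]
  have hmap : (gaussianReal 0 1).map (fun x => Real.sqrt v * x + m) = gaussianReal m v := by
    have : (fun x : ℝ => Real.sqrt v * x + m) = (· + m) ∘ ((Real.sqrt v) * ·) := rfl
    rw [this, ← Measure.map_map (measurable_add_const m) (measurable_const_mul _),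
      gaussianReal_map_const_mul, gaussianReal_map_add_const]
    congr 1
    · ring
  have hpre : (fun x : ℝ => Real.sqrt v * x + m) ⁻¹' Set.Ioi 0
      = Set.Ioi (-(m / Real.sqrt v)) := by
    ext x
    simp only [Set.mem_preimage, Set.mem_Ioi, neg_div, neg_lt, lt_div_iff₀ hs]
    constructor <;> intro hx <;> nlinarith
  have h2 : gaussianReal m v (Set.Ioi 0) = gaussianReal 0 1 (Set.Ioi (-(m / Real.sqrt v))) := by
    rw [← hmap, Measure.map_apply (by fun_prop) measurableSet_Ioi, hpre]
  rw [h2]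
  have h3 : gaussianReal 0 1 (Set.Iic (m / Real.sqrt v))
      = gaussianReal 0 1 (Set.Ici (-(m / Real.sqrt v))) := by
    have hpre2 : (fun x : ℝ => (-1 : ℝ) * x) ⁻¹' Set.Iic (m / Real.sqrt v)
        = Set.Ici (-(m / Real.sqrt v)) := by
      ext x
      simp only [Set.mem_preimage, Set.mem_Iic, Set.mem_Ici, neg_one_mul]
      constructor <;> intro hx <;> linarith
    conv_lhs => rw [← gaussianReal_neg_map]
    rw [Measure.map_apply (by fun_prop) measurableSet_Iic, hpre2]
  rw [h3, measure_congr (MeasureTheory.Ioi_ae_eq_Ici' (std_noAtoms _))]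

lemma std_tendsto_atTop : Filter.Tendsto stdNormalCDF Filter.atTop (nhds 1) := by
  have h := tendsto_measure_Iic_atTop (μ := gaussianReal 0 1)
  rw [measure_univ] at h
  have := (ENNReal.tendsto_toReal (by norm_num : (1 : ℝ≥0∞) ≠ ⊤)).comp h
  exact this

theorem absolute_mobility_equal_variances {Ω : Type*} [MeasurableSpace Ω]
    (μ : Measure Ω) [IsProbabilityMeasure μ] (Xp Xc : Ω → ℝ)
    (μp μc σ β : ℝ) (hσ : 0 < σ) (hβ : β < 1) (hμ : μp < μc)
    (h : IsBivariateGaussian μ Xp Xc μp μc (σ ^ 2) (σ ^ 2) (σ ^ 2 * β)) :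
    (μ {ω | Xp ω < Xc ω}).toReal =
      stdNormalCDF ((μc - μp) / (σ * Real.sqrt (2 * (1 - β)))) ∧
    Filter.Tendsto (fun b : ℝ =>
        stdNormalCDF ((μc - μp) / (σ * Real.sqrt (2 * (1 - b)))))
      (nhdsWithin 1 (Set.Iio 1)) (nhds 1) := by
  constructor
  · have hmap := h (-1) 1
    have hmean : (-1 : ℝ) * μp + 1 * μc = μc - μp := by ring
    have hvar : ((-1 : ℝ)) ^ 2 * σ ^ 2 + 2 * (-1) * 1 * (σ ^ 2 * β) + 1 ^ 2 * σ ^ 2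
        = 2 * σ ^ 2 * (1 - β) := by ring
    rw [hmean, hvar] at hmap
    have h1β : (0:ℝ) < 1 - β := by linarith
    have hvpos : (0 : ℝ) < 2 * σ ^ 2 * (1 - β) := by positivity
    have hvne : (2 * σ ^ 2 * (1 - β)).toNNReal ≠ 0 := by
      simp [Real.toNNReal_eq_zero, not_le, hvpos]
    have hfm : AEMeasurable (fun ω => (-1 : ℝ) * Xp ω + 1 * Xc ω) μ :=
      aemeasurable_of_map_neZero (by rw [hmap]; infer_instance)
    have hset : {ω | Xp ω < Xc ω}
        = (fun ω => (-1 : ℝ) * Xp ω + 1 * Xc ω) ⁻¹' Set.Ioi 0 := by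
      ext ω
      simp only [Set.mem_setOf_eq, Set.mem_preimage, Set.mem_Ioi]
      constructor <;> intro <;> linarith
    rw [hset, ← Measure.map_apply_of_aemeasurable hfm measurableSet_Ioi, hmap,
      gauss_Ioi _ _ hvne]
    have hcoe : ((2 * σ ^ 2 * (1 - β)).toNNReal : ℝ) = 2 * σ ^ 2 * (1 - β) :=
      Real.coe_toNNReal _ hvpos.le
    have hsqrt : Real.sqrt ((2 * σ ^ 2 * (1 - β)).toNNReal : ℝ)
        = σ * Real.sqrt (2 * (1 - β)) := by
      rw [hcoe, show 2 * σ ^ 2 * (1 - β) = σ ^ 2 * (2 * (1 - β)) by ring,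
        Real.sqrt_mul (sq_nonneg _), Real.sqrt_sq hσ.le]
    rw [stdNormalCDF, hsqrt]
  · have hg : Filter.Tendsto (fun b : ℝ => σ * Real.sqrt (2 * (1 - b)))
        (nhdsWithin 1 (Set.Iio 1)) (nhdsWithin 0 (Set.Ioi 0)) := by
      rw [tendsto_nhdsWithin_iff]
      constructor
      · have hc : Continuous (fun b : ℝ => σ * Real.sqrt (2 * (1 - b))) := by fun_prop
        have h0 : Filter.Tendsto (fun b : ℝ => σ * Real.sqrt (2 * (1 - b)))
            (nhdsWithin 1 (Set.Iio 1)) (nhds (σ * Real.sqrt (2 * (1 - 1)))) :=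
          (hc.tendsto 1).mono_left nhdsWithin_le_nhds
        simpa using h0
      · filter_upwards [self_mem_nhdsWithin] with b hb
        have : (0 : ℝ) < 2 * (1 - b) := by
          simp only [Set.mem_Iio] at hb; linarith
        exact mul_pos hσ (Real.sqrt_pos.2 this)
    have ht : Filter.Tendsto (fun b : ℝ => (μc - μp) / (σ * Real.sqrt (2 * (1 - b))))
        (nhdsWithin 1 (Set.Iio 1)) Filter.atTop := by
      simp_rw [div_eq_mul_inv]
      exact Filter.Tendsto.const_mul_atTop (by linarith) hg.inv_tendsto_nhdsGT_zero
    exact std_tendsto_atTop.comp ht
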